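/- Let D ⊆ ℝ² be open, let g, h : D → ℝ be continuously differentiable, and suppose that the Poisson bracket ∂₁g·∂₂h − ∂₂g·∂₁h vanishes identically on D. Let p ∈ D be a point with ∇g(p) ≠ 0 and ∇h(p) ≠ 0. Then there is an open neighborhood U ⊆ D of p such that { q ∈ U : g(q) = g(p) } = { q ∈ U : h(q) = h(p) }; i.e., near p the level curve of g through p and the level curve of h through p coincide. -/

import Mathlib

open Set Metric Filter Topology

lemma clm_eval (L : ℝ × ℝ →L[ℝ] ℝ) (v : ℝ × ℝ) :
    L v = v.1 * L (1, 0) + v.2 * L (0, 1) := by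
  have hv : v = v.1 • ((1:ℝ), (0:ℝ)) + v.2 • ((0:ℝ), (1:ℝ)) := by
    ext <;> simp
  rw [hv, map_add, map_smul, map_smul, smul_eq_mul, smul_eq_mul]
  rw [← hv]

noncomputable def mkEquiv (L : ℝ × ℝ →L[ℝ] ℝ) (hc : L (0, 1) ≠ 0) :
    (ℝ × ℝ) ≃L[ℝ] (ℝ × ℝ) :=
  ContinuousLinearEquiv.equivOfInverse
    ((ContinuousLinearMap.fst ℝ ℝ ℝ).prod L)
    ((ContinuousLinearMap.fst ℝ ℝ ℝ).prod
      ((L (0, 1))⁻¹ • (ContinuousLinearMap.snd ℝ ℝ ℝ - L (1, 0) • ContinuousLinearMap.fst ℝ ℝ ℝ)))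
    (fun v => by
      have := clm_eval L v
      ext
      · simp
      · simp only [ContinuousLinearMap.prod_apply, ContinuousLinearMap.coe_fst',
          ContinuousLinearMap.smul_apply, ContinuousLinearMap.coe_sub',
          Pi.sub_apply, ContinuousLinearMap.coe_snd', smul_eq_mul]
        field_simp
        linarith [clm_eval L v])
    (fun w => by
      ext
      · simp
      · simp only [ContinuousLinearMap.prod_apply, ContinuousLinearMap.coe_fst',
          ContinuousLinearMap.smul_apply, ContinuousLinearMap.coe_sub',
          Pi.sub_apply, ContinuousLinearMap.coe_snd', smul_eq_mul]
        rw [clm_eval L (w.1, (L (0,1))⁻¹ * (w.2 - L (1,0) * w.1))]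
        field_simp
        ring)

lemma mkEquiv_coe (L : ℝ × ℝ →L[ℝ] ℝ) (hc : L (0, 1) ≠ 0) :
    (mkEquiv L hc : (ℝ × ℝ) →L[ℝ] (ℝ × ℝ)) = (ContinuousLinearMap.fst ℝ ℝ ℝ).prod L := rfl

lemma mkEquiv_symm_snd (L : ℝ × ℝ →L[ℝ] ℝ) (hc : L (0, 1) ≠ 0) (w : ℝ × ℝ) :
    L ((mkEquiv L hc).symm w) = w.2 := by
  have h := (mkEquiv L hc).apply_symm_apply w
  have := congrArg Prod.snd h
  exact this

lemma key2 (D : Set (ℝ × ℝ)) (hD : IsOpen D) (g h : ℝ × ℝ → ℝ)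
    (hg : ContDiffOn ℝ 1 g D) (hh : ContDiffOn ℝ 1 h D)
    (hbracket : ∀ q ∈ D,
      fderiv ℝ g q (1, 0) * fderiv ℝ h q (0, 1)
        - fderiv ℝ g q (0, 1) * fderiv ℝ h q (1, 0) = 0)
    (p : ℝ × ℝ) (hp : p ∈ D) (hgp2 : 0 < fderiv ℝ g p (0, 1)) :
    ∃ U : Set (ℝ × ℝ), IsOpen U ∧ p ∈ U ∧ U ⊆ D ∧
      ∀ q ∈ U, g q = g p → h q = h p := by
  -- continuity of the partial derivative
  have hfdc : ContinuousOn (fun q => fderiv ℝ g q (0, 1)) D :=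
    (hg.continuousOn_fderiv_of_isOpen hD le_rfl).clm_apply continuousOn_const
  have h1 : ∀ᶠ q in 𝓝 p, q ∈ D := hD.mem_nhds hp
  have h2 : ContinuousAt (fun q => fderiv ℝ g q (0, 1)) p :=
    hfdc.continuousAt (hD.mem_nhds hp)
  have h3 : ∀ᶠ q in 𝓝 p, 0 < fderiv ℝ g q (0, 1) := h2.eventually (eventually_gt_nhds hgp2)
  obtain ⟨r, hr0, hrP⟩ := Metric.eventually_nhds_iff.mp (h1.and h3)
  set B := Metric.ball p r with hBdef
  have hBD : B ⊆ D := fun q hq => (hrP (mem_ball.mp hq)).1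
  have hpos : ∀ q ∈ B, 0 < fderiv ℝ g q (0, 1) := fun q hq => (hrP (mem_ball.mp hq)).2
  have hpB : p ∈ B := Metric.mem_ball_self hr0
  -- strict derivatives
  have hgS : ∀ q ∈ B, HasStrictFDerivAt g (fderiv ℝ g q) q := fun q hq =>
    (hg.contDiffAt (hD.mem_nhds (hBD hq))).hasStrictFDerivAt one_ne_zero
  have hhS : ∀ q ∈ B, HasStrictFDerivAt h (fderiv ℝ h q) q := fun q hq =>
    (hh.contDiffAt (hD.mem_nhds (hBD hq))).hasStrictFDerivAt one_ne_zero
  -- slice derivatives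
  have hslice : ∀ q ∈ B, HasDerivAt (fun y => g (q.1, y)) (fderiv ℝ g (q.1, q.2) (0, 1)) q.2 := by
    intro q hq
    have hc : HasDerivAt (fun y : ℝ => ((q.1, y) : ℝ × ℝ)) ((0 : ℝ), (1 : ℝ)) q.2 :=
      (hasDerivAt_const q.2 q.1).prodMk (hasDerivAt_id q.2)
    exact ((hgS q hq).hasFDerivAt).comp_hasDerivAt q.2 hc
  -- strict monotonicity in y
  have hmono : ∀ x ∈ Metric.ball p.1 r,
      StrictMonoOn (fun y => g (x, y)) (Metric.ball p.2 r) := by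
    intro x hx
    have hmem : ∀ y ∈ Metric.ball p.2 r, ((x, y) : ℝ × ℝ) ∈ B := by
      intro y hy
      rw [hBdef, ← ball_prod_same]
      exact ⟨hx, hy⟩
    apply strictMonoOn_of_deriv_pos (convex_ball _ _)
    · intro y hy
      exact (hslice (x, y) (hmem y hy)).continuousAt.continuousWithinAt
    · intro y hy
      rw [Metric.isOpen_ball.interior_eq] at hy
      rw [(hslice (x, y) (hmem y hy)).deriv]
      exact hpos _ (hmem y hy)
  -- Φ and its injectivity on B
  set Φ : ℝ × ℝ → ℝ × ℝ := fun q => (q.1, g q) with hΦdef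
  have hinj : Set.InjOn Φ B := by
    intro q hq q' hq' hEq
    have hEq' : (q.1, g q) = (q'.1, g q') := hEq
    rw [Prod.mk.injEq] at hEq'
    obtain ⟨hf1, hf2⟩ := hEq'
    rw [hBdef, ← ball_prod_same] at hq hq'
    have hgy : g (q.1, q.2) = g (q.1, q'.2) := by
      rw [Prod.mk.eta]; rw [hf2, hf1]
    have := (hmono q.1 hq.1).injOn hq.2 hq'.2 hgy
    exact Prod.ext hf1 this
  set Ψ : ℝ × ℝ → ℝ × ℝ := Function.invFunOn Φ B with hΨdef
  have hleft : ∀ q ∈ B, Ψ (Φ q) = q := fun q hq => hinj.leftInvOn_invFunOn hq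
  have hright : ∀ z ∈ Φ '' B, Φ (Ψ z) = z ∧ Ψ z ∈ B := by
    rintro z ⟨q, hq, rfl⟩
    rw [hleft q hq]; exact ⟨rfl, hq⟩
  -- main per-point inverse function theorem package
  have hmain : ∀ q ∈ B, Φ '' B ∈ 𝓝 (Φ q) ∧
      ∃ A : ℝ × ℝ →L[ℝ] ℝ × ℝ, HasFDerivAt Ψ A (Φ q) ∧
        ∀ w : ℝ × ℝ, fderiv ℝ g q (A w) = w.2 := by
    intro q hq
    have hcne : fderiv ℝ g q (0, 1) ≠ 0 := ne_of_gt (hpos q hq)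
    set Eq : (ℝ × ℝ) ≃L[ℝ] (ℝ × ℝ) := mkEquiv (fderiv ℝ g q) hcne with hEqdef
    have hstrict : HasStrictFDerivAt Φ (Eq : (ℝ × ℝ) →L[ℝ] ℝ × ℝ) q := by
      rw [hEqdef, mkEquiv_coe]
      exact hasStrictFDerivAt_fst.prodMk (hgS q hq)
    set e := hstrict.toOpenPartialHomeomorph Φ with hedef
    have hecoe : (e : ℝ × ℝ → ℝ × ℝ) = Φ := hstrict.toOpenPartialHomeomorph_coe
    have hqsrc : q ∈ e.source := hstrict.mem_toOpenPartialHomeomorph_source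
    set W := Φ '' (B ∩ e.source) with hWdef
    have hWopen : IsOpen W := by
      have : W = e '' (B ∩ e.source) := by rw [hWdef, hecoe]
      rw [this]
      exact e.isOpen_image_of_subset_source
        (Metric.isOpen_ball.inter e.open_source) (Set.inter_subset_right)
    have hqW : Φ q ∈ W := ⟨q, ⟨hq, hqsrc⟩, rfl⟩
    have hWT : W ⊆ Φ '' B := Set.image_mono Set.inter_subset_left
    constructor
    · exact Filter.mem_of_superset (hWopen.mem_nhds hqW) hWT
    · refine ⟨(Eq.symm : (ℝ × ℝ) →L[ℝ] ℝ × ℝ), ?_, ?_⟩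
      · have hEqev : Ψ =ᶠ[𝓝 (Φ q)] hstrict.localInverse Φ _ q := by
          filter_upwards [hWopen.mem_nhds hqW]
          rintro z ⟨w, ⟨hwB, hwsrc⟩, rfl⟩
          rw [hleft w hwB, hstrict.localInverse_def]
          have : e w = Φ w := by rw [← hecoe]
          rw [← this, e.left_inv hwsrc]
        exact (hstrict.to_localInverse.hasFDerivAt).congr_of_eventuallyEq hEqev
      · intro w
        exact mkEquiv_symm_snd (fderiv ℝ g q) hcne w
  -- openness of the image
  have hTopen : IsOpen (Φ '' B) := by
    rw [isOpen_iff_mem_nhds]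
    rintro z ⟨q, hq, rfl⟩
    exact (hmain q hq).1
  have hpT : Φ p ∈ Φ '' B := ⟨p, hpB, rfl⟩
  obtain ⟨r₁, hr₁0, hr₁sub⟩ := Metric.isOpen_iff.mp hTopen _ hpT
  set r₀ := min r r₁ with hr₀def
  have hr₀0 : 0 < r₀ := lt_min hr0 hr₁0
  refine ⟨Metric.ball p r₀, Metric.isOpen_ball, Metric.mem_ball_self hr₀0,
    fun q hq => hBD (Metric.ball_subset_ball (min_le_left _ _) hq), ?_⟩
  -- the horizontal line lands in the image
  have hline : ∀ x ∈ Metric.ball p.1 r₀, ((x, g p) : ℝ × ℝ) ∈ Φ '' B := by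
    intro x hx
    apply hr₁sub
    have hdd : dist ((x, g p) : ℝ × ℝ) (Φ p) = max (dist x p.1) (dist (g p) (g p)) := rfl
    rw [mem_ball, hdd, dist_self]
    exact max_lt (lt_of_lt_of_le (mem_ball.mp hx) (min_le_right _ _)) hr₁0
  -- the curve
  set γ : ℝ → ℝ × ℝ := fun x => Ψ (x, g p) with hγdef
  have hγ : ∀ x ∈ Metric.ball p.1 r₀, Φ (γ x) = (x, g p) ∧ γ x ∈ B := fun x hx =>
    hright _ (hline x hx)
  have hder : ∀ x ∈ Metric.ball p.1 r₀, HasDerivAt (fun x => h (γ x)) 0 x := by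
    intro x hx
    obtain ⟨hΦγ, hγB⟩ := hγ x hx
    obtain ⟨-, A, hA, hAw⟩ := hmain (γ x) hγB
    rw [hΦγ] at hA
    have hcurve : HasDerivAt (fun x : ℝ => ((x, g p) : ℝ × ℝ)) ((1 : ℝ), (0 : ℝ)) x :=
      (hasDerivAt_id x).prodMk (hasDerivAt_const x _)
    have hγd : HasDerivAt γ (A (1, 0)) x := by
      have := hA.comp_hasDerivAt x hcurve; exact this
    have hH : HasDerivAt (fun x => h (γ x)) (fderiv ℝ h (γ x) (A (1, 0))) x :=
      ((hhS _ hγB).hasFDerivAt).comp_hasDerivAt x hγd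
    have hv : fderiv ℝ g (γ x) (A ((1 : ℝ), (0 : ℝ))) = 0 := hAw (1, 0)
    set v := A ((1 : ℝ), (0 : ℝ)) with hvdef
    have hbr := hbracket (γ x) (hBD hγB)
    have hgv := clm_eval (fderiv ℝ g (γ x)) v
    have hhv := clm_eval (fderiv ℝ h (γ x)) v
    have ha2 : fderiv ℝ g (γ x) (0, 1) ≠ 0 := ne_of_gt (hpos _ hγB)
    have hzero : fderiv ℝ h (γ x) v = 0 := by
      have h0 : fderiv ℝ g (γ x) (0, 1) * fderiv ℝ h (γ x) v = 0 := by
        linear_combination fderiv ℝ g (γ x) (0, 1) * hhv + fderiv ℝ h (γ x) (0, 1) * hv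
          - fderiv ℝ h (γ x) (0, 1) * hgv - v.1 * hbr
      rcases mul_eq_zero.mp h0 with h' | h'
      · exact absurd h' ha2
      · exact h'
    rw [← hzero]
    exact hH
  -- constancy of x ↦ h (γ x)
  have hconst : ∀ x ∈ Metric.ball p.1 r₀, h (γ x) = h (γ p.1) := by
    intro x hx
    have hp1 : p.1 ∈ Metric.ball p.1 r₀ := Metric.mem_ball_self hr₀0
    have haI : min x p.1 ∈ Metric.ball p.1 r₀ := by
      rcases min_choice x p.1 with h' | h' <;> rw [h']
      · exact hx
      · exact hp1
    have hbI : max x p.1 ∈ Metric.ball p.1 r₀ := by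
      rcases max_choice x p.1 with h' | h' <;> rw [h']
      · exact hx
      · exact hp1
    have hsub : Icc (min x p.1) (max x p.1) ⊆ Metric.ball p.1 r₀ :=
      (convex_ball p.1 r₀).ordConnected.out haI hbI
    have hcont : ContinuousOn (fun x => h (γ x)) (Icc (min x p.1) (max x p.1)) := fun y hy =>
      (hder y (hsub hy)).continuousAt.continuousWithinAt
    have hd : ∀ y ∈ Ico (min x p.1) (max x p.1),
        HasDerivWithinAt (fun x => h (γ x)) 0 (Ici y) y := fun y hy =>
      (hder y (hsub (Ico_subset_Icc_self hy))).hasDerivWithinAt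
    have hconst' := constant_of_has_deriv_right_zero hcont hd
    have hxab : x ∈ Icc (min x p.1) (max x p.1) := ⟨min_le_left _ _, le_max_left _ _⟩
    have hpab : p.1 ∈ Icc (min x p.1) (max x p.1) := ⟨min_le_right _ _, le_max_right _ _⟩
    rw [hconst' x hxab, hconst' p.1 hpab]
  -- conclusion
  intro q hqU hgq
  have hq1 : q.1 ∈ Metric.ball p.1 r₀ := by
    rw [mem_ball]
    exact lt_of_le_of_lt (le_max_left _ _) (by rw [← Prod.dist_eq]; exact mem_ball.mp hqU)
  have hqB : q ∈ B := Metric.ball_subset_ball (min_le_left _ _) hqU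
  have hγq : γ q.1 = q := by
    show Ψ (q.1, g p) = q
    rw [← hgq]
    exact hleft q hqB
  have hγp : γ p.1 = p := by
    show Ψ (p.1, g p) = p
    exact hleft p hpB
  calc h q = h (γ q.1) := by rw [hγq]
    _ = h (γ p.1) := hconst q.1 hq1
    _ = h p := by rw [hγp]

lemma key1 (D : Set (ℝ × ℝ)) (hD : IsOpen D) (g h : ℝ × ℝ → ℝ)
    (hg : ContDiffOn ℝ 1 g D) (hh : ContDiffOn ℝ 1 h D)
    (hbracket : ∀ q ∈ D,
      fderiv ℝ g q (1, 0) * fderiv ℝ h q (0, 1)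
        - fderiv ℝ g q (0, 1) * fderiv ℝ h q (1, 0) = 0)
    (p : ℝ × ℝ) (hp : p ∈ D) (hgp2 : fderiv ℝ g p (0, 1) ≠ 0) :
    ∃ U : Set (ℝ × ℝ), IsOpen U ∧ p ∈ U ∧ U ⊆ D ∧
      ∀ q ∈ U, g q = g p → h q = h p := by
  rcases hgp2.lt_or_gt with hneg | hposi
  · -- use -g
    have hfd : ∀ q ∈ D, fderiv ℝ (fun q => -g q) q = -fderiv ℝ g q := by
      intro q hq
      exact fderiv_neg
    have hbr' : ∀ q ∈ D,
        fderiv ℝ (fun q => -g q) q (1, 0) * fderiv ℝ h q (0, 1)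
          - fderiv ℝ (fun q => -g q) q (0, 1) * fderiv ℝ h q (1, 0) = 0 := by
      intro q hq
      rw [hfd q hq]
      simp only [ContinuousLinearMap.neg_apply]
      linarith [hbracket q hq]
    have hpos' : 0 < fderiv ℝ (fun q => -g q) p (0, 1) := by
      rw [hfd p hp]
      simp only [ContinuousLinearMap.neg_apply]
      linarith
    obtain ⟨U, hUo, hpU, hUD, hkey⟩ := key2 D hD (fun q => -g q) h hg.neg hh hbr' p hp hpos'
    exact ⟨U, hUo, hpU, hUD, fun q hq hgq => hkey q hq (by simp [hgq])⟩
  · exact key2 D hD g h hg hh hbracket p hp hposi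

lemma key (D : Set (ℝ × ℝ)) (hD : IsOpen D) (g h : ℝ × ℝ → ℝ)
    (hg : ContDiffOn ℝ 1 g D) (hh : ContDiffOn ℝ 1 h D)
    (hbracket : ∀ q ∈ D,
      fderiv ℝ g q (1, 0) * fderiv ℝ h q (0, 1)
        - fderiv ℝ g q (0, 1) * fderiv ℝ h q (1, 0) = 0)
    (p : ℝ × ℝ) (hp : p ∈ D) (hgp : fderiv ℝ g p ≠ 0) :
    ∃ U : Set (ℝ × ℝ), IsOpen U ∧ p ∈ U ∧ U ⊆ D ∧
      ∀ q ∈ U, g q = g p → h q = h p := by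
  by_cases h2 : fderiv ℝ g p (0, 1) ≠ 0
  · exact key1 D hD g h hg hh hbracket p hp h2
  · push_neg at h2
    have h1 : fderiv ℝ g p (1, 0) ≠ 0 := by
      intro h1
      apply hgp
      refine ContinuousLinearMap.ext fun v => ?_
      rw [clm_eval (fderiv ℝ g p) v, h1, h2]
      simp
    -- swap coordinates
    set σ : ℝ × ℝ → ℝ × ℝ := Prod.swap with hσdef
    have hσc : ContDiff ℝ 1 σ := contDiff_snd.prodMk contDiff_fst
    set σL : ℝ × ℝ →L[ℝ] ℝ × ℝ := (ContinuousLinearMap.snd ℝ ℝ ℝ).prod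
      (ContinuousLinearMap.fst ℝ ℝ ℝ) with hσLdef
    have hσL : ∀ w : ℝ × ℝ, σL w = σ w := fun w => rfl
    set D' : Set (ℝ × ℝ) := σ ⁻¹' D with hD'def
    have hD'o : IsOpen D' := hD.preimage (hσc.continuous)
    have hmapsTo : Set.MapsTo σ D' D := fun q hq => hq
    have hg' : ContDiffOn ℝ 1 (g ∘ σ) D' := hg.comp (hσc.contDiffOn) hmapsTo
    have hh' : ContDiffOn ℝ 1 (h ∘ σ) D' := hh.comp (hσc.contDiffOn) hmapsTo
    have hfd : ∀ (f : ℝ × ℝ → ℝ), ContDiffOn ℝ 1 f D → ∀ q' ∈ D', ∀ w,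
        fderiv ℝ (f ∘ σ) q' w = fderiv ℝ f (σ q') (σ w) := by
      intro f hf q' hq' w
      have hdf : DifferentiableAt ℝ f (σ q') :=
        (hf.differentiableOn one_ne_zero).differentiableAt (hD.mem_nhds hq')
      have hcomp : HasFDerivAt (f ∘ σ) ((fderiv ℝ f (σ q')).comp σL) q' :=
        hdf.hasFDerivAt.comp q' (σL.hasFDerivAt)
      rw [hcomp.fderiv]
      rfl
    have hbr' : ∀ q' ∈ D',
        fderiv ℝ (g ∘ σ) q' (1, 0) * fderiv ℝ (h ∘ σ) q' (0, 1)
          - fderiv ℝ (g ∘ σ) q' (0, 1) * fderiv ℝ (h ∘ σ) q' (1, 0) = 0 := by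
      intro q' hq'
      rw [hfd g hg q' hq', hfd h hh q' hq', hfd g hg q' hq', hfd h hh q' hq']
      have : σ ((1 : ℝ), (0 : ℝ)) = ((0 : ℝ), (1 : ℝ)) := rfl
      have h2' : σ ((0 : ℝ), (1 : ℝ)) = ((1 : ℝ), (0 : ℝ)) := rfl
      rw [this, h2']
      linarith [hbracket (σ q') hq']
    have hp' : σ p ∈ D' := by
      show σ (σ p) ∈ D
      rw [hσdef]
      simpa using hp
    have hgp' : fderiv ℝ (g ∘ σ) (σ p) (0, 1) ≠ 0 := by
      rw [hfd g hg (σ p) hp']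
      have : σ (σ p) = p := Prod.swap_swap p
      rw [show σ ((0 : ℝ), (1 : ℝ)) = ((1 : ℝ), (0 : ℝ)) from rfl, this]
      exact h1
    obtain ⟨U', hU'o, hpU', hU'D, hkey⟩ :=
      key1 D' hD'o (g ∘ σ) (h ∘ σ) hg' hh' hbr' (σ p) hp' hgp'
    refine ⟨σ ⁻¹' U', hU'o.preimage hσc.continuous, hpU', ?_, ?_⟩
    · intro q hq
      have : σ q ∈ D' := hU'D hq
      simpa [hσdef, hD'def] using this
    · intro q hq hgq
      have := hkey (σ q) hq (by simpa [hσdef] using hgq)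
      simpa [hσdef] using this

/-- two `C¹` Poisson-commuting Hamiltonians on an open set `D ⊆ ℝ²` have,
near each point of `D` which is a rest point of neither, the same level curve. -/
theorem stmt_5 (D : Set (ℝ × ℝ)) (hD : IsOpen D) (g h : ℝ × ℝ → ℝ)
    (hg : ContDiffOn ℝ 1 g D) (hh : ContDiffOn ℝ 1 h D)
    (hbracket : ∀ q ∈ D,
      fderiv ℝ g q (1, 0) * fderiv ℝ h q (0, 1)
        - fderiv ℝ g q (0, 1) * fderiv ℝ h q (1, 0) = 0)
    (p : ℝ × ℝ) (hp : p ∈ D)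
    (hgp : fderiv ℝ g p ≠ 0) (hhp : fderiv ℝ h p ≠ 0) :
    ∃ U : Set (ℝ × ℝ), IsOpen U ∧ p ∈ U ∧ U ⊆ D ∧
      {q ∈ U | g q = g p} = {q ∈ U | h q = h p} := by
  obtain ⟨U₁, hU₁o, hpU₁, hU₁D, hk₁⟩ := key D hD g h hg hh hbracket p hp hgp
  have hbr' : ∀ q ∈ D,
      fderiv ℝ h q (1, 0) * fderiv ℝ g q (0, 1)
        - fderiv ℝ h q (0, 1) * fderiv ℝ g q (1, 0) = 0 := fun q hq => by
    linarith [hbracket q hq]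
  obtain ⟨U₂, hU₂o, hpU₂, hU₂D, hk₂⟩ := key D hD h g hh hg hbr' p hp hhp
  refine ⟨U₁ ∩ U₂, hU₁o.inter hU₂o, ⟨hpU₁, hpU₂⟩, fun q hq => hU₁D hq.1, ?_⟩
  ext q
  simp only [Set.mem_setOf_eq, Set.mem_inter_iff]
  constructor
  · rintro ⟨⟨hq1, hq2⟩, hgq⟩
    exact ⟨⟨hq1, hq2⟩, hk₁ q hq1 hgq⟩
  · rintro ⟨⟨hq1, hq2⟩, hhq⟩
    exact ⟨⟨hq1, hq2⟩, hk₂ q hq2 hhq⟩
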